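/- arXiv:2012.04122 — 6 statements merged into one kernel-verified Lean document; each statement's English description precedes it below -/
import Mathlib

section
/- Abstract energy conservation: Let $V, H$ be real inner product spaces, with differentiable curves $u, B : [0,T] \to V$ and $\rho : [0,T] \to H$. Suppose there are maps $a : V \times V \times V \to \mathbb{R}$ (trilinear, alternating in its last two arguments), a bilinear pairing, and the equations $\langle \partial_t(\rho u), v \rangle + a(\rho u, u, v) - a(B,B,v) + \tfrac{1}{2} b(u \cdot u, \rho, v) = \langle p, \operatorname{div} v \rangle$ for all $v$, $\langle \partial_t B, C \rangle + a(C, B, u) = 0$ for all $C$, and $\langle \partial_t \rho, \sigma \rangle + b(\sigma, \rho, u) = 0$ for all $\sigma$, with $\operatorname{div} u = 0$. Then the energy $E(t) = \tfrac{1}{2}\int_\Omega (\rho u \cdot u + B \cdot B)\, dx$ satisfies $\frac{dE}{dt} = 0$. -/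
open scoped RealInnerProductSpace

/-- Abstract energy conservation for the weak formulation of inhomogeneous
incompressible MHD.  Here `V` plays the role of the space of vector fields,
`H` the space of scalar fields, `m t` represents the momentum `ρ u`,
`q x y` represents the pointwise dot product `x ⋅ y` as a scalar field,
`dv` represents the divergence operator, `a` is the trilinear form
(alternating in its last two arguments) and `b` the advection form.
Given the weak momentum, magnetic and density equations, with `div u = 0`,
the energy `E(t) = ½(⟨ρu, u⟩ + ⟨B, B⟩)` is constant. -/
theorem statement5
    (V H : Type*) [NormedAddCommGroup V] [InnerProductSpace ℝ V]
    [NormedAddCommGroup H] [InnerProductSpace ℝ H]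
    (u u' B B' m m' : ℝ → V) (ρ ρ' p : ℝ → H)
    (q : V →ₗ[ℝ] V →ₗ[ℝ] H) (dv : V →ₗ[ℝ] H)
    (a : V → V → V → ℝ) (b : H → H → V → ℝ)
    (ha : ∀ w x y : V, a w x y = - a w y x)
    (hu : ∀ t, HasDerivAt u (u' t) t)
    (hB : ∀ t, HasDerivAt B (B' t) t)
    (hm : ∀ t, HasDerivAt m (m' t) t)
    (hρ : ∀ t, HasDerivAt ρ (ρ' t) t)
    -- the derivative of ∫ ρ u ⋅ u is computed as 2⟨∂ₜ(ρu), u⟩ - ⟨∂ₜρ, u ⋅ u⟩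
    (hkin : ∀ t, HasDerivAt (fun s => ⟪m s, u s⟫)
      (2 * ⟪m' t, u t⟫ - ⟪ρ' t, q (u t) (u t)⟫) t)
    -- momentum equation
    (hmom : ∀ t, ∀ v : V,
      ⟪m' t, v⟫ + a (m t) (u t) v - a (B t) (B t) v
        + (1 / 2 : ℝ) * b (q (u t) (u t)) (ρ t) v = ⟪p t, dv v⟫)
    -- magnetic field equation
    (hmag : ∀ t, ∀ C : V, ⟪B' t, C⟫ + a C (B t) (u t) = 0)
    -- density equation
    (hden : ∀ t, ∀ σ : H, ⟪ρ' t, σ⟫ + b σ (ρ t) (u t) = 0)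
    -- incompressibility
    (hdiv : ∀ t, dv (u t) = 0) :
    ∀ t, HasDerivAt (fun s => (1 / 2 : ℝ) * (⟪m s, u s⟫ + ⟪B s, B s⟫)) 0 t := by
  intro t
  have hBB : HasDerivAt (fun s => ⟪B s, B s⟫)
      (⟪B t, B' t⟫ + ⟪B' t, B t⟫) t := (hB t).inner ℝ (hB t)
  have hsum : HasDerivAt (fun s => ⟪m s, u s⟫ + ⟪B s, B s⟫)
      ((2 * ⟪m' t, u t⟫ - ⟪ρ' t, q (u t) (u t)⟫) + (⟪B t, B' t⟫ + ⟪B' t, B t⟫)) t :=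
    (hkin t).add hBB
  have hval := (hsum.const_mul ((1 / 2 : ℝ)))
  have h1 : ⟪m' t, u t⟫ = a (B t) (B t) (u t)
      - (1 / 2 : ℝ) * b (q (u t) (u t)) (ρ t) (u t) := by
    have := hmom t (u t)
    have haa : a (m t) (u t) (u t) = 0 := by
      have := ha (m t) (u t) (u t); linarith
    rw [hdiv t] at this
    simp [haa] at this
    linarith
  have h2 : ⟪B' t, B t⟫ = - a (B t) (B t) (u t) := by
    have := hmag t (B t); linarith
  have h3 : ⟪ρ' t, q (u t) (u t)⟫ = - b (q (u t) (u t)) (ρ t) (u t) := by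
    have := hden t (q (u t) (u t)); linarith
  have h4 : ⟪B t, B' t⟫ = ⟪B' t, B t⟫ := real_inner_comm _ _
  have hz : (1 / 2 : ℝ) * ((2 * ⟪m' t, u t⟫ - ⟪ρ' t, q (u t) (u t)⟫)
      + (⟪B t, B' t⟫ + ⟪B' t, B t⟫)) = 0 := by
    rw [h1, h2, h3, h4, h2]; ring
  rw [hz] at hval
  exact hval
end

section
/- Cross-helicity conservation: Suppose $\rho \equiv 1$, $u, B$ are time-dependent divergence-free vector fields tangent to $\partial\Omega$ satisfying the weak MHD equations $\langle \partial_t u, v \rangle + a(u,u,v) - a(B,B,v) + \tfrac{1}{2} b(u \cdot u, 1, v) = \langle p, \operatorname{div} v \rangle$ for all $v$ tangent to $\partial\Omega$, and $\langle \partial_t B, C \rangle + a(C,B,u) = 0$ for all $C$ tangent to $\partial\Omega$, where $a$ is alternating in its last two arguments and $b(f, 1, w) = 0$ when $\operatorname{div} w = 0$ and $w$ is tangent to $\partial\Omega$. Then $\frac{d}{dt} \int_\Omega u \cdot B\, dx = 0$. -/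
open scoped RealInnerProductSpace

/-- Abstract cross-helicity conservation for homogeneous (`ρ ≡ 1`)
incompressible MHD.  `V` plays the role of the space of (divergence-free)
vector fields tangent to `∂Ω`, `H` the space of scalar fields, `dv` the
divergence operator, `q x y` the pointwise dot product `x ⋅ y`,
`a` the trilinear form `a(w,u,v) = ∫ w ⋅ ∇×(u×v)` (alternating in its last
two arguments), and `b f w` the form `b(f, 1, w)`, which vanishes whenever
`div w = 0`.  Then the cross-helicity `⟨u, B⟩` is constant in time. -/
theorem statement6
    (V H : Type*) [NormedAddCommGroup V] [InnerProductSpace ℝ V]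
    [NormedAddCommGroup H] [InnerProductSpace ℝ H]
    (u u' B B' : ℝ → V) (p : ℝ → H)
    (q : V →ₗ[ℝ] V →ₗ[ℝ] H) (dv : V →ₗ[ℝ] H)
    (a : V → V → V → ℝ) (b : H → V → ℝ)
    (ha : ∀ w x y : V, a w x y = - a w y x)
    (hb : ∀ (f : H) (w : V), dv w = 0 → b f w = 0)
    (hu : ∀ t, HasDerivAt u (u' t) t)
    (hB : ∀ t, HasDerivAt B (B' t) t)
    -- incompressibility and div B = 0
    (hdivu : ∀ t, dv (u t) = 0)
    (hdivB : ∀ t, dv (B t) = 0)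
    -- momentum equation with ρ ≡ 1
    (hmom : ∀ t, ∀ v : V,
      ⟪u' t, v⟫ + a (u t) (u t) v - a (B t) (B t) v
        + (1 / 2 : ℝ) * b (q (u t) (u t)) v = ⟪p t, dv v⟫)
    -- magnetic field equation
    (hmag : ∀ t, ∀ C : V, ⟪B' t, C⟫ + a C (B t) (u t) = 0) :
    ∀ t, HasDerivAt (fun s => ⟪u s, B s⟫) 0 t := by
  intro t
  have h := (hu t).inner ℝ (hB t)
  have e1 : ⟪u' t, B t⟫ = - a (u t) (u t) (B t) := by
    have := hmom t (B t)
    have hbB := hb (q (u t) (u t)) (B t) (hdivB t)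
    have haBBB : a (B t) (B t) (B t) = 0 := by
      have := ha (B t) (B t) (B t); linarith
    rw [hdivB t] at this
    simp [hbB, haBBB] at this
    linarith
  have e2 : ⟪u t, B' t⟫ = a (u t) (u t) (B t) := by
    have := hmag t (u t)
    have : ⟪B' t, u t⟫ = - a (u t) (B t) (u t) := by linarith
    rw [real_inner_comm] at this
    rw [this, ha (u t) (B t) (u t)]; ring
  have : ⟪u t, B' t⟫ + ⟪u' t, B t⟫ = 0 := by rw [e1, e2]; ring
  rw [this] at h
  exact h
end

section
/- Discrete magnetic helicity conservation (abstract form): Let $V$ be an inner product space of vector fields and let $B_k, B_{k+1}, u \in V$ with $B_{k+1} - B_k = -\Delta t\, \nabla \times E$ for some $E$, and suppose that for any vector fields $A_k, A_{k+1}$ with $\nabla \times A_k = B_k$, $\nabla \times A_{k+1} = B_{k+1}$, and $A_k \times n = A_{k+1} \times n = 0$ on $\partial\Omega$, the trilinear form satisfies $a_h(A, B_{k+1/2}, u) = 0$ whenever $\nabla \times A = B_{k+1/2}$, and the update satisfies $\langle (B_{k+1} - B_k)/\Delta t, C \rangle = -a_h(C, B_{k+1/2}, u)$ for all relevant test fields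 $C$, including $C = A_{k+1/2} := (A_k + A_{k+1})/2$ modulo projection. Then $\int_\Omega A_{k+1} \cdot B_{k+1}\, dx = \int_\Omega A_k \cdot B_k\, dx$. -/
open scoped RealInnerProductSpace

/-- Discrete magnetic helicity conservation (abstract form).  `V` is an inner
product space of (discrete) vector fields, `curlOp` the curl operator, which
is symmetric for the fields involved (integration by parts with the boundary
conditions `A × n = 0`).  If `B₁ - B₀ = -Δt ∇×E`, the update satisfies
`⟨(B₁-B₀)/Δt, C⟩ = -a_h(C, B_{1/2}, u)` for all test fields `C`, and
`a_h(A, B_{1/2}, u) = 0` whenever `∇×A = B_{1/2}`, then for potentials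
`A₀, A₁` with `∇×A₀ = B₀` and `∇×A₁ = B₁` one has `⟨A₁, B₁⟩ = ⟨A₀, B₀⟩`. -/
theorem statement11
    (V : Type*) [NormedAddCommGroup V] [InnerProductSpace ℝ V]
    (curlOp : V →ₗ[ℝ] V)
    (hsym : ∀ X Y : V, ⟪curlOp X, Y⟫ = ⟪X, curlOp Y⟫)
    (B₀ B₁ u E A₀ A₁ : V) (Δt : ℝ) (hΔt : 0 < Δt)
    (hupd : B₁ - B₀ = -Δt • curlOp E)
    (hA₀ : curlOp A₀ = B₀) (hA₁ : curlOp A₁ = B₁)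
    (a_h : V → V → V → ℝ)
    (hvanish : ∀ A : V, curlOp A = (1 / 2 : ℝ) • (B₀ + B₁) →
      a_h A ((1 / 2 : ℝ) • (B₀ + B₁)) u = 0)
    (hmag : ∀ C : V,
      ⟪Δt⁻¹ • (B₁ - B₀), C⟫ = - a_h C ((1 / 2 : ℝ) • (B₀ + B₁)) u) :
    ⟪A₁, B₁⟫ = ⟪A₀, B₀⟫ := by
  set Aₕ : V := (1 / 2 : ℝ) • (A₀ + A₁) with hAh
  have hcurlAh : curlOp Aₕ = (1 / 2 : ℝ) • (B₀ + B₁) := by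
    simp [hAh, map_smul, map_add, hA₀, hA₁]
  have h0 : ⟪Δt⁻¹ • (B₁ - B₀), Aₕ⟫ = 0 := by
    rw [hmag Aₕ, hvanish Aₕ hcurlAh, neg_zero]
  have h1 : ⟪B₁ - B₀, Aₕ⟫ = 0 := by
    have := h0
    rw [real_inner_smul_left] at this
    have hne : Δt⁻¹ ≠ 0 := inv_ne_zero (ne_of_gt hΔt)
    exact (mul_eq_zero.mp this).resolve_left hne
  have h2 : ⟪A₁ - A₀, (1 / 2 : ℝ) • (B₀ + B₁)⟫ = 0 := by
    rw [← hcurlAh, ← hsym, map_sub, hA₀, hA₁, h1]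
  have h3 : ⟪Aₕ, B₁ - B₀⟫ = 0 := by rw [real_inner_comm]; exact h1
  have key : ⟪A₁, B₁⟫ - ⟪A₀, B₀⟫ =
      ⟪A₁ - A₀, (1 / 2 : ℝ) • (B₀ + B₁)⟫ + ⟪Aₕ, B₁ - B₀⟫ := by
    simp only [hAh, inner_sub_left, inner_sub_right, inner_add_left,
      inner_add_right, real_inner_smul_left, real_inner_smul_right]
    ring_nf
  rw [h2, h3, add_zero] at key
  linarith
end

section
/- Vanishing of the doubly-projected trilinear form: Let $P : L^2(\Omega)^3 \to U$ be the orthogonal projection onto a subspace $U$ of vector fields whose elements $F$ satisfy $n \times F = 0$ on $\partial\Omega$, and define $a_h(w,u,v) = \int_\Omega w \cdot \nabla \times P(Pu \times Pv)\, dx$. If $\nabla \times w = u$ (weakly), then $a_h(w,u,v) = 0$ for all $v$. -/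
open scoped RealInnerProductSpace

/-- Vanishing of the doubly-projected trilinear form.  `V` plays the role of
`L²(Ω)³`, `U ⊂ H₀(curl, Ω)` is a closed subspace whose elements `F` satisfy
`n × F = 0` on `∂Ω`, `P` is the `L²`-orthogonal projection onto `U`, `cross`
is the pointwise cross product (so `⟨x, cross x y⟩ = 0`), and integration by
parts `⟨w, ∇×F⟩ = ⟨∇×w, F⟩` is valid for `F ∈ U`.  With
`a_h(w,u,v) = ⟨w, ∇×P(Pu × Pv)⟩`, if `∇×w = u` then `a_h(w,u,v) = 0`. -/
theorem statement13
    (V : Type*) [NormedAddCommGroup V] [InnerProductSpace ℝ V] [CompleteSpace V]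
    (U : Submodule ℝ V) [CompleteSpace U]
    (curlOp : V →ₗ[ℝ] V)
    (cross : V →ₗ[ℝ] V →ₗ[ℝ] V)
    (hcross : ∀ x y : V, ⟪x, cross x y⟫ = 0)
    (hIBP : ∀ (w : V) (F : U), ⟪w, curlOp F⟫ = ⟪curlOp w, (F : V)⟫)
    (w u v : V) (hw : curlOp w = u) :
    ⟪w, curlOp ((Submodule.orthogonalProjection U
        (cross ((Submodule.orthogonalProjection U u : V))
               ((Submodule.orthogonalProjection U v : V))) : V))⟫ = 0 := by
  rw [hIBP, hw, ← Submodule.starProjection_apply, ← Submodule.inner_starProjection_left_eq_right,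
    Submodule.starProjection_apply, hcross]
end

section
/- Abstract fully-discrete energy conservation: Let $V, H$ be real inner product spaces, $u_k, u_{k+1}, B_k, B_{k+1} \in V$, $\rho_k, \rho_{k+1}, \theta \in H$, and write midpoints $u = (u_k+u_{k+1})/2$, $B = (B_k+B_{k+1})/2$, $\rho = (\rho_k+\rho_{k+1})/2$, $\rho u = (\rho_k u_k + \rho_{k+1} u_{k+1})/2$. Suppose: (i) $a_h$ is trilinear and alternating in its last two arguments; (ii) the momentum update $\langle (\rho_{k+1}u_{k+1} - \rho_k u_k)/\Delta t, v \rangle + a_h(\rho u, u, v) - a_h(B,B,v) + \tilde b(\theta, \rho, v) = \langle p_{k+1}, \operatorname{div} v \rangle$ holds for all $v$, and holds with $v = u$ where $\operatorname{div} u = 0$; (iii) the magnetic update $\langle (B_{k+1}-B_k)/\Delta t, C \rangle + a_h(C, B, u) = 0$ holds for $C = B$; (iv) the density update $\langle (\rho_{k+1}-\rho_k)/\Delta t, \sigma \rangle + \tilde b(\sigma, \rho, u) = 0$ holds for $\sigma = \theta$; (v) $\theta$ satisfies $\langle \theta, \tau \rangle = \tfrac12 \langle u_k \cdot u_{k+1},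 \tau \rangle$ for all $\tau \in H$, and $u_k \cdot u_{k+1}$ pairs with $H$ through its projection $\theta$. Then the discrete energy is conserved: $\langle \rho_{k+1} u_{k+1}, u_{k+1} \rangle + \|B_{k+1}\|^2 = \langle \rho_k u_k, u_k \rangle + \|B_k\|^2$. -/
open scoped RealInnerProductSpace

/-- Abstract fully-discrete energy conservation.  `V` is the space of discrete
vector fields, `H` the space of discrete scalar fields, `q x y` represents the
pointwise dot product `x ⋅ y ∈ H`, `m₀ = ρ₀u₀`, `m₁ = ρ₁u₁` are the momenta
(encoded through `hm₀`, `hm₁`), `dv` is the divergence operator, `a_h` is the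
trilinear form (alternating in its last two arguments), and `btil` is the
(possibly upwinded) advection form.  Under the discrete momentum, magnetic and
density updates, with `θ = ½ u₀⋅u₁` and `div u_{1/2} = 0`, the discrete energy
`⟨ρu, u⟩ + ‖B‖²` is conserved. -/
theorem statement16
    (V H : Type*) [NormedAddCommGroup V] [InnerProductSpace ℝ V]
    [NormedAddCommGroup H] [InnerProductSpace ℝ H]
    (Δt : ℝ) (hΔt : 0 < Δt)
    (u₀ u₁ B₀ B₁ m₀ m₁ : V) (ρ₀ ρ₁ θ p : H)
    (q : V →ₗ[ℝ] V →ₗ[ℝ] H) (hq_symm : ∀ x y : V, q x y = q y x)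
    (dv : V →ₗ[ℝ] H)
    (a_h : V → V → V → ℝ)
    (ha : ∀ w x y : V, a_h w x y = - a_h w y x)
    (btil : H → H → V → ℝ)
    -- the momenta m₀ = ρ₀u₀ and m₁ = ρ₁u₁ pair via the pointwise dot product
    (hm₀ : ∀ v : V, ⟪m₀, v⟫ = ⟪ρ₀, q u₀ v⟫)
    (hm₁ : ∀ v : V, ⟪m₁, v⟫ = ⟪ρ₁, q u₁ v⟫)
    -- θ is (the projection of) ½ u₀⋅u₁
    (hθ : ∀ τ : H, ⟪θ, τ⟫ = (1 / 2 : ℝ) * ⟪q u₀ u₁, τ⟫)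
    -- momentum update, for all test fields v
    (hmom : ∀ v : V,
      ⟪Δt⁻¹ • (m₁ - m₀), v⟫
        + a_h ((1 / 2 : ℝ) • (m₀ + m₁)) ((1 / 2 : ℝ) • (u₀ + u₁)) v
        - a_h ((1 / 2 : ℝ) • (B₀ + B₁)) ((1 / 2 : ℝ) • (B₀ + B₁)) v
        + btil θ ((1 / 2 : ℝ) • (ρ₀ + ρ₁)) v
      = ⟪p, dv v⟫)
    -- incompressibility of the midpoint velocity
    (hdiv : dv ((1 / 2 : ℝ) • (u₀ + u₁)) = 0)
    -- magnetic update, tested with C = B_{1/2}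
    (hmag : ⟪Δt⁻¹ • (B₁ - B₀), (1 / 2 : ℝ) • (B₀ + B₁)⟫
        + a_h ((1 / 2 : ℝ) • (B₀ + B₁)) ((1 / 2 : ℝ) • (B₀ + B₁))
            ((1 / 2 : ℝ) • (u₀ + u₁)) = 0)
    -- density update, tested with σ = θ
    (hden : ⟪Δt⁻¹ • (ρ₁ - ρ₀), θ⟫
        + btil θ ((1 / 2 : ℝ) • (ρ₀ + ρ₁)) ((1 / 2 : ℝ) • (u₀ + u₁)) = 0) :
    ⟪m₁, u₁⟫ + ‖B₁‖ ^ 2 = ⟪m₀, u₀⟫ + ‖B₀‖ ^ 2 := by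

  set u : V := (1 / 2 : ℝ) • (u₀ + u₁) with hu
  -- momentum tested with u
  have h0 : a_h ((1 / 2 : ℝ) • (m₀ + m₁)) u u = 0 := by
    have := ha ((1 / 2 : ℝ) • (m₀ + m₁)) u u; linarith
  have hmomu := hmom u
  rw [hdiv, inner_zero_right, h0] at hmomu
  -- cross term identity
  have hcross : ⟪m₁, u₀⟫ - ⟪m₀, u₁⟫ = 2 * ⟪θ, ρ₁ - ρ₀⟫ := by
    have e1 := hm₁ u₀
    have e2 := hm₀ u₁
    have e3 := hθ (ρ₁ - ρ₀)
    rw [hq_symm u₁ u₀] at e1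
    rw [inner_sub_right, inner_sub_right] at e3
    rw [real_inner_comm (q u₀ u₁) ρ₁] at e1
    rw [real_inner_comm (q u₀ u₁) ρ₀] at e2
    rw [inner_sub_right]
    linarith
  -- expand the time-difference inner products
  have hB : ⟪Δt⁻¹ • (B₁ - B₀), (1 / 2 : ℝ) • (B₀ + B₁)⟫
      = Δt⁻¹ * ((1/2 : ℝ) * (‖B₁‖ ^ 2 - ‖B₀‖ ^ 2)) := by
    rw [real_inner_smul_left, real_inner_smul_right, inner_sub_left,
      inner_add_right, inner_add_right,
      real_inner_self_eq_norm_sq, real_inner_self_eq_norm_sq,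
      real_inner_comm B₁ B₀]
    ring
  have hM : ⟪Δt⁻¹ • (m₁ - m₀), u⟫
      = Δt⁻¹ * ((1/2 : ℝ) * (⟪m₁, u₁⟫ - ⟪m₀, u₀⟫ + (⟪m₁, u₀⟫ - ⟪m₀, u₁⟫))) := by
    rw [hu, real_inner_smul_left, real_inner_smul_right, inner_sub_left,
      inner_add_right, inner_add_right]
    ring
  have hR : ⟪Δt⁻¹ • (ρ₁ - ρ₀), θ⟫ = Δt⁻¹ * ⟪θ, ρ₁ - ρ₀⟫ := by
    rw [real_inner_smul_left, real_inner_comm]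
  rw [hM, hcross] at hmomu
  rw [hB] at hmag
  rw [hR] at hden
  have hne : Δt⁻¹ ≠ 0 := inv_ne_zero hΔt.ne'
  have key : Δt⁻¹ * ((1/2 : ℝ) * (⟪m₁, u₁⟫ - ⟪m₀, u₀⟫ + ‖B₁‖ ^ 2 - ‖B₀‖ ^ 2)) = 0 := by
    have := ha ((1 / 2 : ℝ) • (B₀ + B₁)) ((1 / 2 : ℝ) • (B₀ + B₁)) u
    linarith [hmomu, hmag, hden]
  have := mul_eq_zero.mp key
  rcases this with h | h
  · exact absurd h hne
  · linarith
end

section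
/- Fully-discrete cross-helicity conservation (constant density): Suppose $\rho \equiv 1$, $\operatorname{div} B_{k+1/2} = 0$, and the updates $\langle (u_{k+1}-u_k)/\Delta t, v \rangle + a_h(u,u,v) - a_h(B,B,v) + \tfrac12 \tilde b(u_k \cdot u_{k+1}, 1, v) = \langle p_{k+1}, \operatorname{div} v \rangle$ and $\langle (B_{k+1}-B_k)/\Delta t, C \rangle + a_h(C,B,u) = 0$ hold with $v = B := B_{k+1/2}$ and $C = u := u_{k+1/2}$, where $a_h$ is alternating in its last two arguments and $\tilde b(f, 1, w) = 0$. Then $\langle u_{k+1}, B_{k+1} \rangle = \langle u_k, B_k \rangle$. -/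
open scoped RealInnerProductSpace

/-- Fully-discrete cross-helicity conservation for constant density (`ρ ≡ 1`).
`V` is the space of discrete vector fields, `H` of discrete scalar fields,
`dv` the divergence operator, `q u₀ u₁` the pointwise dot product
`u₀ ⋅ u₁ ∈ H`, `a_h` a trilinear form alternating in its last two arguments,
and `bt f w` the upwinded form `b̃(f, 1, w)`, which vanishes for
divergence-free `w`.  If the momentum update holds with `v = B_{1/2}` and the
magnetic update with `C = u_{1/2}`, and `div B_{1/2} = 0`, then
`⟨u₁, B₁⟩ = ⟨u₀, B₀⟩`. -/
theorem statement17
    (V H : Type*) [NormedAddCommGroup V] [InnerProductSpace ℝ V]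
    [NormedAddCommGroup H] [InnerProductSpace ℝ H]
    (Δt : ℝ) (hΔt : 0 < Δt)
    (u₀ u₁ B₀ B₁ : V) (p : H)
    (q : V →ₗ[ℝ] V →ₗ[ℝ] H) (dv : V →ₗ[ℝ] H)
    (a_h : V → V → V → ℝ)
    (ha : ∀ w x y : V, a_h w x y = - a_h w y x)
    (bt : H → V → ℝ)
    (hbt : ∀ (f : H) (w : V), dv w = 0 → bt f w = 0)
    (hdivB : dv ((1 / 2 : ℝ) • (B₀ + B₁)) = 0)
    -- momentum update tested with v = B_{1/2}
    (hmom : ⟪Δt⁻¹ • (u₁ - u₀), (1 / 2 : ℝ) • (B₀ + B₁)⟫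
        + a_h ((1 / 2 : ℝ) • (u₀ + u₁)) ((1 / 2 : ℝ) • (u₀ + u₁))
            ((1 / 2 : ℝ) • (B₀ + B₁))
        - a_h ((1 / 2 : ℝ) • (B₀ + B₁)) ((1 / 2 : ℝ) • (B₀ + B₁))
            ((1 / 2 : ℝ) • (B₀ + B₁))
        + (1 / 2 : ℝ) * bt (q u₀ u₁) ((1 / 2 : ℝ) • (B₀ + B₁))
      = ⟪p, dv ((1 / 2 : ℝ) • (B₀ + B₁))⟫)
    -- magnetic update tested with C = u_{1/2}
    (hmag : ⟪Δt⁻¹ • (B₁ - B₀), (1 / 2 : ℝ) • (u₀ + u₁)⟫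
        + a_h ((1 / 2 : ℝ) • (u₀ + u₁)) ((1 / 2 : ℝ) • (B₀ + B₁))
            ((1 / 2 : ℝ) • (u₀ + u₁)) = 0) :
    ⟪u₁, B₁⟫ = ⟪u₀, B₀⟫ := by
  have h0 : a_h ((1 / 2 : ℝ) • (B₀ + B₁)) ((1 / 2 : ℝ) • (B₀ + B₁))
      ((1 / 2 : ℝ) • (B₀ + B₁)) = 0 := by
    have := ha ((1 / 2 : ℝ) • (B₀ + B₁)) ((1 / 2 : ℝ) • (B₀ + B₁))
      ((1 / 2 : ℝ) • (B₀ + B₁))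
    linarith
  have h1 : bt (q u₀ u₁) ((1 / 2 : ℝ) • (B₀ + B₁)) = 0 := hbt _ _ hdivB
  have h2 := ha ((1 / 2 : ℝ) • (u₀ + u₁)) ((1 / 2 : ℝ) • (B₀ + B₁))
      ((1 / 2 : ℝ) • (u₀ + u₁))
  rw [hdivB] at hmom
  simp only [inner_zero_right, h0, h1, mul_zero] at hmom
  rw [h2] at hmag
  have hsum : ⟪Δt⁻¹ • (u₁ - u₀), (1 / 2 : ℝ) • (B₀ + B₁)⟫
      + ⟪Δt⁻¹ • (B₁ - B₀), (1 / 2 : ℝ) • (u₀ + u₁)⟫ = 0 := by linarith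
  have hne : Δt⁻¹ ≠ 0 := inv_ne_zero hΔt.ne'
  simp only [real_inner_smul_left, real_inner_smul_right, inner_sub_left,
    inner_add_right, inner_add_left, inner_sub_right] at hsum
  have h3 : ⟪u₁, B₀⟫ - ⟪u₀, B₀⟫ + (⟪u₁, B₁⟫ - ⟪u₀, B₁⟫)
      + (⟪B₁, u₀⟫ - ⟪B₀, u₀⟫ + (⟪B₁, u₁⟫ - ⟪B₀, u₁⟫)) = 0 := by
    have := mul_ne_zero hne (by norm_num : (1/2:ℝ) ≠ 0)
    field_simp at hsum
    linarith [hsum]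
  rw [real_inner_comm B₁ u₀, real_inner_comm B₀ u₀, real_inner_comm B₁ u₁,
    real_inner_comm B₀ u₁] at h3
  linarith [real_inner_comm u₁ B₁, real_inner_comm u₀ B₀]
end
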